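/- Let λ ∈ ℂ with 0 < |λ| < 1. Then 0 is an attracting fixed point of f_λ, i.e. f_λ(0) = 0 and deriv f_λ(0) = λ with |λ| < 1; moreover it is the only attracting fixed point: if z ∈ ℂ satisfies cos z ≠ 0, λ·tan z = z and |deriv f_λ(z)| < 1, then z = 0. -/

import Mathlib

set_option maxHeartbeats 1000000

open Complex Filter
open scoped Nat

section AuxReal


private lemma ladder {f g : ℝ → ℝ} (h0 : f 0 = 0)
    (hder : ∀ t, HasDerivAt f (g t) t) (hg : ∀ t, 0 ≤ t → 0 ≤ g t) :
    ∀ t, 0 ≤ t → 0 ≤ f t := by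
  intro t ht
  have hmono : MonotoneOn f (Set.Ici (0:ℝ)) := by
    apply monotoneOn_of_deriv_nonneg (convex_Ici 0)
    · exact fun y _ => (hder y).continuousAt.continuousWithinAt
    · intro y hy
      exact (hder y).differentiableAt.differentiableWithinAt
    · intro y hy
      rw [interior_Ici] at hy
      rw [(hder y).deriv]
      exact hg y hy.le
  have := hmono Set.self_mem_Ici ht ht
  rwa [h0] at this

-- sin t ≥ t - t^3/6 for t ≥ 0
private lemma L2 : ∀ t : ℝ, 0 ≤ t → 0 ≤ Real.sin t - (t - t^3/6) := by
  apply ladder (g := fun t => Real.cos t - (1 - t^2/2))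
  · simp
  · intro t
    have h1 : HasDerivAt (fun t : ℝ => t - t^3/6) (1 - 3*t^2/6) t :=
      (hasDerivAt_id t).sub ((hasDerivAt_pow 3 t).div_const 6)
    have h2 := (Real.hasDerivAt_sin t).sub h1
    exact h2.congr_deriv (by ring)
  · intro t _
    nlinarith [Real.one_sub_sq_div_two_le_cos (x := t)]

private lemma L3' : ∀ u : ℝ, 0 ≤ u → 0 ≤ (1 - u^2/2 + u^4/24) - Real.cos u := by
  apply ladder (g := fun u => Real.sin u - (u - u^3/6))
  · simp
  · intro u
    have h1 : HasDerivAt (fun u : ℝ => 1 - u^2/2 + u^4/24) (0 - 2*u/2 + 4*u^3/24) u :=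
      (((hasDerivAt_pow 2 u).div_const 2).const_sub 1).add ((hasDerivAt_pow 4 u).div_const 24) |>.congr_deriv (by ring)
    have h2 := h1.sub (Real.hasDerivAt_cos u)
    exact h2.congr_deriv (by ring)
  · exact L2

-- cos t ≤ 1 - t^2/2 + t^4/24 (all t)
lemma cos_le_quartic (t : ℝ) : Real.cos t ≤ 1 - t^2/2 + t^4/24 := by
  rcases le_total 0 t with h | h
  · linarith [L3' t h]
  · have := L3' (-t) (by linarith)
    rw [Real.cos_neg] at this
    nlinarith [this]

-- sin t ≤ t - t^3/6 + t^5/120 for t ≥ 0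
private lemma L4 : ∀ t : ℝ, 0 ≤ t → 0 ≤ (t - t^3/6 + t^5/120) - Real.sin t := by
  apply ladder (g := fun u => (1 - u^2/2 + u^4/24) - Real.cos u)
  · simp
  · intro u
    have h1 : HasDerivAt (fun u : ℝ => u - u^3/6 + u^5/120) (1 - 3*u^2/6 + 5*u^4/120) u :=
      ((hasDerivAt_id u).sub ((hasDerivAt_pow 3 u).div_const 6)).add ((hasDerivAt_pow 5 u).div_const 120)
    have h2 := h1.sub (Real.hasDerivAt_sin u)
    exact h2.congr_deriv (by ring)
  · exact L3'

private lemma L5' : ∀ u : ℝ, 0 ≤ u → 0 ≤ Real.cos u - (1 - u^2/2 + u^4/24 - u^6/720) := by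
  apply ladder (g := fun u => (u - u^3/6 + u^5/120) - Real.sin u)
  · simp
  · intro u
    have h1 : HasDerivAt (fun u : ℝ => 1 - u^2/2 + u^4/24 - u^6/720)
        (0 - 2*u/2 + 4*u^3/24 - 6*u^5/720) u :=
      ((((hasDerivAt_pow 2 u).div_const 2).const_sub 1).add ((hasDerivAt_pow 4 u).div_const 24)).sub
        ((hasDerivAt_pow 6 u).div_const 720) |>.congr_deriv (by ring)
    have h2 := (Real.hasDerivAt_cos u).sub h1
    exact h2.congr_deriv (by ring)
  · exact L4

-- 1 - t^2/2 + t^4/24 - t^6/720 ≤ cos t (all t)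
lemma sextic_le_cos (t : ℝ) : 1 - t^2/2 + t^4/24 - t^6/720 ≤ Real.cos t := by
  rcases le_total 0 t with h | h
  · linarith [L5' t h]
  · have := L5' (-t) (by linarith)
    rw [Real.cos_neg] at this
    nlinarith [this]


-- 1 + t^2/2 + t^4/24 + t^6/720 ≤ cosh t
lemma cosh_lower (t : ℝ) : 1 + t^2/2 + t^4/24 + t^6/720 ≤ Real.cosh t := by
  have h := Real.hasSum_cosh t
  have hle := sum_le_hasSum (Finset.range 4)
    (fun i _ => by
      have h1 : (0:ℝ) ≤ t^(2*i) := Even.pow_nonneg (even_two_mul i) t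
      have h2 : (0:ℝ) < ((2*i)! : ℝ) := by exact_mod_cast Nat.factorial_pos _
      positivity) h
  have heq : ∑ i ∈ Finset.range 4, t ^ (2*i) / ((2*i)! : ℝ) = 1 + t^2/2 + t^4/24 + t^6/720 := by
    norm_num [Finset.sum_range_succ, Nat.factorial]
  linarith [hle, heq.symm.le]

-- cosh t ≤ 1 + t^2/2 + t^4/24 + t^6/720 + t^8/40320 * cosh t
lemma cosh_upper (t : ℝ) : Real.cosh t ≤ 1 + t^2/2 + t^4/24 + t^6/720 + t^8/40320 * Real.cosh t := by
  have h := Real.hasSum_cosh t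
  have hsum := h.summable
  have hsplit := Summable.sum_add_tsum_nat_add (f := fun n => t ^ (2*n) / ((2*n)! : ℝ)) 4 hsum
  have htail : ∑' n : ℕ, t ^ (2*(n+4)) / ((2*(n+4))! : ℝ)
      ≤ ∑' n : ℕ, t^8/40320 * (t ^ (2*n) / ((2*n)! : ℝ)) := by
    have hs1 : Summable (fun n : ℕ => t ^ (2*(n+4)) / ((2*(n+4))! : ℝ)) :=
      (summable_nat_add_iff (f := fun n => t ^ (2*n) / ((2*n)! : ℝ)) 4).mpr hsum
    apply Summable.tsum_le_tsum _ hs1 (hsum.mul_left _)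
    intro n
    have hfact : (40320 : ℝ) * ((2*n)! : ℝ) ≤ ((2*(n+4))! : ℝ) := by
      have hd : (8)! * (2*n)! ∣ (8 + 2*n)! := Nat.factorial_mul_factorial_dvd_factorial_add 8 (2*n)
      have hle := Nat.le_of_dvd (Nat.factorial_pos _) hd
      have h3 : (8)! * (2*n)! ≤ (2*(n+4))! := by
        convert hle using 2
        ring
      have h4 : (8)! = 40320 := by decide
      exact_mod_cast h4 ▸ h3
    have h2 : t ^ (2*(n+4)) = t^8 * t^(2*n) := by
      rw [← pow_add]; ring_nf
    rw [h2]
    have hpn : (0:ℝ) ≤ t^(2*n) := Even.pow_nonneg (even_two_mul n) t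
    have hf1 : (0:ℝ) < ((2*n)! : ℝ) := by exact_mod_cast Nat.factorial_pos _
    have hf2 : (0:ℝ) < ((2*(n+4))! : ℝ) := by exact_mod_cast Nat.factorial_pos _
    calc t^8 * t^(2*n) / ((2*(n+4))! : ℝ) ≤ t^8 * t^(2*n) / (40320 * ((2*n)! : ℝ)) := by
          apply div_le_div_of_nonneg_left (by positivity) (by positivity) hfact
      _ = t^8/40320 * (t^(2*n) / ((2*n)! : ℝ)) := by ring
  have hfront : ∑ i ∈ Finset.range 4, t ^ (2*i) / ((2*i)! : ℝ) = 1 + t^2/2 + t^4/24 + t^6/720 := by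
    norm_num [Finset.sum_range_succ, Nat.factorial]
  have htsum_tail : ∑' n : ℕ, t^8/40320 * (t ^ (2*n) / ((2*n)! : ℝ)) = t^8/40320 * Real.cosh t := by
    rw [tsum_mul_left, h.tsum_eq]
  have : Real.cosh t = ∑ i ∈ Finset.range 4, t ^ (2*i) / ((2*i)! : ℝ)
      + ∑' n : ℕ, t ^ (2*(n+4)) / ((2*(n+4))! : ℝ) := by
    rw [← h.tsum_eq, ← hsplit]
  have h5 := htsum_tail ▸ htail
  linarith [this, h5, hfront]

lemma key_poly (P Q C H : ℝ) (hP0 : 0 ≤ P) (hQ0 : 0 ≤ Q)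
    (hC1 : -1 ≤ C) (hC2 : C ≤ 1) (hH1 : 1 ≤ H)
    (hcup : C ≤ 1 - P/2 + P^2/24)
    (hclo : 1 - P/2 + P^2/24 - P^3/720 ≤ C)
    (hhlo : 1 + Q/2 + Q^2/24 + Q^3/720 ≤ H)
    (hhup : H ≤ 1 + Q/2 + Q^2/24 + Q^3/720 + Q^4/40320 * H)
    (hA : P + Q < H^2 - C^2)
    (hB : (P + Q) * (H + C) < 4*(H - C)) : False := by
  -- Step 1 : Q ≤ 13/2
  have hQ65 : Q ≤ 13/2 := by
    by_contra hq
    push_neg at hq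
    have h1 : Q * (H - 1) ≤ (P + Q) * (H + C) := by
      nlinarith [mul_nonneg hP0 (by linarith : (0:ℝ) ≤ H + C),
        mul_nonneg hQ0 (by linarith : (0:ℝ) ≤ C + 1)]
    have h2 : Q * (H - 1) < 4*(H-1) + 8 := by nlinarith [h1, hB]
    nlinarith [h2, hhlo, hq]
  -- Step 2 : H ≤ 67/10
  have hH67 : H ≤ 67/10 := by
    have q2 : Q^2 ≤ 169/4 := by nlinarith
    have q3 : Q^3 ≤ 2197/8 := by nlinarith [q2, hQ0]
    have q4 : Q^4 ≤ 28561/16 := by nlinarith [q3, hQ0, q2]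
    have hq4h : Q^4 * H ≤ (28561/16) * H :=
      mul_le_mul_of_nonneg_right q4 (by linarith : (0:ℝ) ≤ H)
    nlinarith [hhup, hq4h, q2, q3]
  -- Step 3 : P + Q < 12
  have hR12 : P + Q < 12 := by
    by_contra hr
    push_neg at hr
    have h1 : (P+Q) * (H - 1) ≤ (P + Q) * (H + C) := by
      nlinarith [mul_nonneg (by linarith : (0:ℝ) ≤ P + Q) (by linarith : (0:ℝ) ≤ C + 1)]
    have h2 : (P+Q) * (H - 1) < 4*(H-1) + 8 := by nlinarith [h1, hB]
    have h3 : H < 2 := by nlinarith [h2, hr]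
    nlinarith [hA, hr, sq_nonneg C]
  -- Step 4a : 0 < H + C
  have hHC : 0 < H + C := by
    rcases lt_or_ge 0 (H + C) with h | h
    · exact h
    · exfalso
      have h1 : 0 ≤ H - C := by linarith
      nlinarith [hA, mul_nonneg h1 (by linarith : (0:ℝ) ≤ -(H+C))]
  -- Step 4b : P + Q < 2*(H - C)
  have hT : P + Q < 2*(H - C) := by
    by_contra ht
    push_neg at ht
    have hHmC : 0 < H - C := by nlinarith [hA, mul_nonneg hP0 hQ0]
    have hR0 : 0 < P + Q := by linarith
    have h1 : H + C < 2 := by nlinarith [hB, ht, hR0]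
    nlinarith [hA, ht, hHmC, h1]
  -- Step 4c
  have hHmCup : H - C ≤ (P+Q)/2 + (Q^2-P^2)/24 + (Q^3+P^3)/720 + Q^4 * H/40320 := by
    nlinarith [hhup, hclo]
  have hii : 0 < (Q^2 - P^2)/12 + (Q^3 + P^3)/360 + Q^4 * H/20160 := by
    linarith [hT, hHmCup]
  -- Step 4d
  have hHCd : 2 + (Q-P)/2 + (Q^2+P^2)/24 + (Q^3-P^3)/720 ≤ H + C := by
    linarith [hhlo, hclo]
  have hMul : (P+Q) * (2 + (Q-P)/2 + (Q^2+P^2)/24 + (Q^3-P^3)/720) ≤ (P+Q)*(H+C) :=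
    mul_le_mul_of_nonneg_left hHCd (by linarith : (0:ℝ) ≤ P + Q)
  have hiv : (P+Q) * (2 + (Q-P)/2 + (Q^2+P^2)/24 + (Q^3-P^3)/720)
      < 4*((P+Q)/2 + (Q^2-P^2)/24 + (Q^3+P^3)/720 + Q^4 * H/40320) := by
    calc (P+Q) * (2 + (Q-P)/2 + (Q^2+P^2)/24 + (Q^3-P^3)/720) ≤ (P+Q)*(H+C) := hMul
      _ < 4*(H-C) := hB
      _ ≤ 4*((P+Q)/2 + (Q^2-P^2)/24 + (Q^3+P^3)/720 + Q^4 * H/40320) := by linarith [hHmCup]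
  have hq4h : Q^4 * H ≤ (871/20) * Q^3 := by
    have h1 : Q * H ≤ 871/20 := by nlinarith [hQ65, hH67, hH1, hQ0]
    have h2 : (0:ℝ) ≤ Q^3 := by positivity
    nlinarith [mul_le_mul_of_nonneg_left h1 h2]
  have hcube : P^3 + Q^3 ≤ (P+Q)*(P^2+Q^2) := by
    nlinarith [mul_nonneg hP0 (sq_nonneg Q), mul_nonneg hQ0 (sq_nonneg P)]
  have hRP4 : (P+Q)*P^3 ≤ 12*P^3 :=
    mul_le_mul_of_nonneg_right hR12.le (pow_nonneg hP0 3)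
  nlinarith [hiv, hii, hq4h, hRP4, pow_nonneg hP0 3, pow_nonneg hQ0 3,
    mul_nonneg (mul_nonneg hP0 hQ0) hQ0, mul_nonneg (mul_nonneg hP0 hP0) hQ0]

lemma key_trig (x y : ℝ)
    (hA : x^2 + y^2 < (Real.sin x^2 + Real.sinh y^2) * (Real.cos x^2 + Real.sinh y^2))
    (hB : (x^2 + y^2) * (Real.cos x^2 + Real.sinh y^2) < Real.sin x^2 + Real.sinh y^2) :
    False := by
  have e1 : Real.sin x^2 = (1 - Real.cos (2*x))/2 := by
    rw [Real.cos_two_mul, Real.sin_sq]; ring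
  have e2 : Real.cos x^2 = (1 + Real.cos (2*x))/2 := by
    rw [Real.cos_two_mul]; ring
  have e3 : Real.sinh y^2 = (Real.cosh (2*y) - 1)/2 := by
    rw [Real.cosh_two_mul, Real.cosh_sq]; ring
  rw [e1, e2, e3] at hA hB
  refine key_poly ((2*x)^2) ((2*y)^2) (Real.cos (2*x)) (Real.cosh (2*y))
    (sq_nonneg _) (sq_nonneg _) (Real.neg_one_le_cos _) (Real.cos_le_one _)
    (Real.one_le_cosh _) ?_ ?_ ?_ ?_ ?_ ?_
  · nlinarith [cos_le_quartic (2*x)]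
  · nlinarith [sextic_le_cos (2*x)]
  · nlinarith [cosh_lower (2*y)]
  · nlinarith [cosh_upper (2*y)]
  · nlinarith [hA]
  · nlinarith [hB]

end AuxReal

/-- The tangent family: `f_λ(z) = λ · tan z`, with Mathlib's total complex tangent. -/
noncomputable def ftan (lam : ℂ) : ℂ → ℂ := fun z => lam * Complex.tan z



lemma normSq_sin' (z : ℂ) :
    Complex.normSq (Complex.sin z) = Real.sin z.re^2 + Real.sinh z.im^2 := by
  rw [Complex.sin_eq]
  simp only [← Complex.ofReal_sin, ← Complex.ofReal_cos, ← Complex.ofReal_sinh,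
    ← Complex.ofReal_cosh]
  rw [show (↑(Real.sin z.re) * ↑(Real.cosh z.im) + ↑(Real.cos z.re) * ↑(Real.sinh z.im) * Complex.I : ℂ)
      = ↑(Real.sin z.re * Real.cosh z.im) + ↑(Real.cos z.re * Real.sinh z.im) * Complex.I by
    push_cast; ring]
  rw [Complex.normSq_add_mul_I]
  have p1 := Real.sin_sq_add_cos_sq z.re
  have p2 := Real.cosh_sq z.im
  linear_combination Real.sin z.re^2 * p2 + Real.sinh z.im^2 * p1

lemma normSq_cos' (z : ℂ) :
    Complex.normSq (Complex.cos z) = Real.cos z.re^2 + Real.sinh z.im^2 := by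
  rw [Complex.cos_eq]
  simp only [← Complex.ofReal_sin, ← Complex.ofReal_cos, ← Complex.ofReal_sinh,
    ← Complex.ofReal_cosh]
  rw [show (↑(Real.cos z.re) * ↑(Real.cosh z.im) - ↑(Real.sin z.re) * ↑(Real.sinh z.im) * Complex.I : ℂ)
      = ↑(Real.cos z.re * Real.cosh z.im) + ↑(-(Real.sin z.re * Real.sinh z.im)) * Complex.I by
    push_cast; ring]
  rw [Complex.normSq_add_mul_I]
  have p1 := Real.sin_sq_add_cos_sq z.re
  have p2 := Real.cosh_sq z.im
  linear_combination Real.cos z.re^2 * p2 + Real.sinh z.im^2 * p1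

/-- For `0 < |λ| < 1`, the origin is an attracting fixed point of `f_λ`
(with multiplier `λ`), and it is the only attracting fixed point. -/
theorem origin_unique_attracting_fixed_point (lam : ℂ)
    (h0 : 0 < ‖lam‖) (h1 : ‖lam‖ < 1) :
    ftan lam 0 = 0 ∧ deriv (ftan lam) 0 = lam ∧
    ∀ z : ℂ, Complex.cos z ≠ 0 → lam * Complex.tan z = z →
      ‖deriv (ftan lam) z‖ < 1 → z = 0 := by
  have hderiv : ∀ z : ℂ, Complex.cos z ≠ 0 →
      deriv (ftan lam) z = lam * (1 / Complex.cos z ^ 2) := by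
    intro z hz
    exact ((Complex.hasDerivAt_tan hz).const_mul lam).deriv
  refine ⟨by simp [ftan], ?_, ?_⟩
  · rw [hderiv 0 (by simp)]
    simp
  · intro z hcos hfix hmul
    rw [hderiv z hcos] at hmul
    have hcos' : 0 < ‖Complex.cos z‖ := norm_pos_iff.mpr hcos
    have habs : ‖lam‖ < ‖Complex.cos z‖^2 := by
      rw [norm_mul, norm_div, norm_one, norm_pow] at hmul
      have hc2 : 0 < ‖Complex.cos z‖^2 := by positivity
      rw [mul_one_div, div_lt_one hc2] at hmul
      exact hmul
    have heq : lam * Complex.sin z = z * Complex.cos z := by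
      rw [Complex.tan_eq_sin_div_cos] at hfix
      field_simp at hfix
      linear_combination hfix
    by_cases hsin : Complex.sin z = 0
    · rw [hsin, mul_zero] at heq
      rcases mul_eq_zero.mp heq.symm with h | h
      · exact h
      · exact absurd h hcos
    · exfalso
      have hsin' : 0 < ‖Complex.sin z‖ := norm_pos_iff.mpr hsin
      have hprod : ‖lam‖ * ‖Complex.sin z‖
          = ‖z‖ * ‖Complex.cos z‖ := by
        rw [← norm_mul, ← norm_mul, heq]
      have hB' : ‖z‖ * ‖Complex.cos z‖ < ‖Complex.sin z‖ := by
        nlinarith [hprod, hsin', h1]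
      have hA' : ‖z‖ < ‖Complex.cos z‖ * ‖Complex.sin z‖ := by
        nlinarith [hprod, habs, hsin', hcos', norm_nonneg z]
      have e0 : ‖z‖^2 = z.re^2 + z.im^2 := by
        rw [Complex.sq_norm, Complex.normSq_apply]; ring
      have esin : ‖Complex.sin z‖^2 = Real.sin z.re^2 + Real.sinh z.im^2 := by
        rw [Complex.sq_norm, normSq_sin']
      have ecos : ‖Complex.cos z‖^2 = Real.cos z.re^2 + Real.sinh z.im^2 := by
        rw [Complex.sq_norm, normSq_cos']
      apply key_trig z.re z.im
      · nlinarith [hA', e0, esin, ecos, norm_nonneg z, hcos', hsin']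
      · nlinarith [hB', e0, esin, ecos, hsin',
          mul_nonneg (norm_nonneg z) (norm_nonneg (Complex.cos z))]
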